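/- Let ω be a homogeneous polynomial of degree k, ℓ a linear form, and f = ω·ℓ^{d-k} ∈ S_d with d ≥ k. If ℓ does not divide ω, then the subspace W = span{θ ℓ^{d-k} : θ ∈ S_k} ∩ span{ω λ ℓ^{d-k-1} : λ ∈ S_1} is one-dimensional; if ℓ divides ω, then dim W = n+1. -/

import Mathlib

open MvPolynomial

section OsculatingAux

lemma aux_single_of_degree_one {σ : Type*} (d : σ →₀ ℕ) (hd : d.degree = 1) :
    ∃ i, d = Finsupp.single i 1 := by
  classical
  have hne : d ≠ 0 := by
    intro h; rw [h] at hd; simp at hd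
  obtain ⟨i, hi⟩ := Finsupp.ne_iff.mp hne
  simp only [Finsupp.coe_zero, Pi.zero_apply] at hi
  have hi1 : d i = 1 := le_antisymm (hd ▸ Finsupp.le_degree i d) (Nat.one_le_iff_ne_zero.mpr hi)
  refine ⟨i, Finsupp.ext fun j => ?_⟩
  rcases eq_or_ne j i with rfl | hj
  · simp [hi1]
  · have hmem : i ∈ d.support := Finsupp.mem_support_iff.mpr hi
    have := Finset.add_sum_erase d.support d hmem
    rw [Finsupp.degree_apply] at hd
    rw [hd, hi1] at this
    have hzero : ∑ s ∈ d.support.erase i, d s = 0 := by omega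
    have : d j = 0 := by
      by_contra h
      have : j ∈ d.support.erase i := Finset.mem_erase.mpr ⟨hj, Finsupp.mem_support_iff.mpr h⟩
      have := Finset.sum_eq_zero_iff.mp hzero j this
      exact h this
    simp [this, Finsupp.single_apply, (Ne.symm hj)]

lemma aux_degree_single_add {σ : Type*} (j : σ) (d : σ →₀ ℕ) :
    (Finsupp.single j 1 + d).degree = d.degree + 1 := by
  rw [Finsupp.degree_eq_weight_one, map_add]
  have : (Finsupp.weight fun _ => (1 : ℕ)) (Finsupp.single j 1) = 1 := by
    simp [Finsupp.weight_apply, Finsupp.sum_single_index]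
  rw [this, ← Finsupp.degree_eq_weight_one]
  omega

variable {K : Type*} [Field K] {n : ℕ}

lemma aux_eq_C_of_homog_zero {σ : Type*} (p : MvPolynomial σ K) (h : p.IsHomogeneous 0) :
    p = C (coeff 0 p) := by
  classical
  ext d
  rw [coeff_C]
  split_ifs with h0
  · subst h0; rfl
  · by_contra hc
    have : d.degree = 0 := by rw [Finsupp.degree_eq_weight_one]; exact h hc
    exact h0 (((Finsupp.degree_eq_zero_iff d).mp this).symm)

lemma aux_isHomogeneous_of_X_mul {σ : Type*} [DecidableEq σ] (j : σ) (q : MvPolynomial σ K)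
    (m : ℕ) (h : (X j * q).IsHomogeneous (m + 1)) : q.IsHomogeneous m := by
  intro d hd
  have h2 : coeff (Finsupp.single j 1 + d) (X j * q) ≠ 0 := by
    rw [coeff_X_mul]; exact hd
  have h3 := h h2
  change (Finsupp.weight fun _ => (1 : ℕ)) _ = _ at h3 ⊢
  rw [← Finsupp.degree_eq_weight_one] at h3 ⊢
  rw [aux_degree_single_add j d] at h3
  omega

lemma aux_homog_one_decomp (ℓ : MvPolynomial (Fin (n+1)) K) (hℓ : ℓ.IsHomogeneous 1) :
    ℓ = ∑ i : Fin (n+1), C (coeff (Finsupp.single i 1) ℓ) * X i := by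
  ext d
  rw [coeff_sum]
  have hterm : ∀ i : Fin (n+1), coeff d (C (coeff (Finsupp.single i 1) ℓ) * X i)
      = if Finsupp.single i 1 = d then coeff d ℓ else 0 := by
    intro i
    rw [coeff_C_mul, coeff_X']
    split_ifs with h
    · rw [← h]; ring
    · ring
  simp_rw [hterm]
  by_cases hdeg : d.degree = 1
  · obtain ⟨i₀, rfl⟩ := aux_single_of_degree_one d hdeg
    have : ∀ i : Fin (n+1), ((Finsupp.single i 1 = Finsupp.single i₀ 1)) ↔ i = i₀ :=
      fun i => Finsupp.single_left_inj one_ne_zero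
    simp_rw [this]
    rw [Finset.sum_ite_eq' Finset.univ i₀ fun _ => coeff _ ℓ]
    simp
  · rw [Finset.sum_eq_zero]
    · exact hℓ.coeff_eq_zero hdeg
    · intro i _
      rw [if_neg]
      intro h
      apply hdeg
      rw [← h]
      simp [Finsupp.degree_single, Finsupp.support_single_ne_zero]

lemma aux_prime_X_mv (j : Fin (n+1)) : Prime (X j : MvPolynomial (Fin (n+1)) K) := by
  have h0 : Prime (X 0 : MvPolynomial (Fin (n+1)) K) := by
    rw [← MulEquiv.prime_iff (MvPolynomial.finSuccEquiv K n).toRingEquiv.toMulEquiv]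
    have : (MvPolynomial.finSuccEquiv K n).toRingEquiv.toMulEquiv (X 0) = Polynomial.X := by
      simp [finSuccEquiv_X_zero]
    rw [this]
    exact Polynomial.prime_X
  have h1 := (MulEquiv.prime_iff
    (renameEquiv K (Equiv.swap (0 : Fin (n+1)) j)).toRingEquiv.toMulEquiv).mpr h0
  have h2 : (renameEquiv K (Equiv.swap (0 : Fin (n+1)) j)).toRingEquiv.toMulEquiv (X 0)
      = (X j : MvPolynomial (Fin (n+1)) K) := by
    simp [renameEquiv_apply, rename_X, Equiv.swap_apply_left]
  rwa [h2] at h1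

lemma aux_exists_good_equiv (ℓ : MvPolynomial (Fin (n+1)) K)
    (hℓ : ℓ.IsHomogeneous 1) (hℓ0 : ℓ ≠ 0) :
    ∃ (E : MvPolynomial (Fin (n+1)) K ≃ₐ[K] MvPolynomial (Fin (n+1)) K) (j : Fin (n+1)),
      E ℓ = X j ∧ (∀ (p : MvPolynomial (Fin (n+1)) K) (m : ℕ),
          p.IsHomogeneous m → (E p).IsHomogeneous m) ∧
        (∀ (p : MvPolynomial (Fin (n+1)) K) (m : ℕ),
          p.IsHomogeneous m → (E.symm p).IsHomogeneous m) := by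
  classical
  set c : Fin (n+1) → K := fun i => coeff (Finsupp.single i 1) ℓ with hc
  have hdecomp : ℓ = ∑ i, C (c i) * X i := aux_homog_one_decomp ℓ hℓ
  obtain ⟨j, hj⟩ : ∃ j, c j ≠ 0 := by
    by_contra h
    push_neg at h
    apply hℓ0
    rw [hdecomp]
    simp [h]
  set T : MvPolynomial (Fin (n+1)) K := ∑ i ∈ Finset.univ.erase j, C (c i) * X i with hT
  have hsplit : ℓ = C (c j) * X j + T := by
    rw [hdecomp, ← Finset.add_sum_erase _ _ (Finset.mem_univ j)]
  set s : Fin (n+1) → MvPolynomial (Fin (n+1)) K :=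
    fun i => if i = j then C (c j)⁻¹ * (X j - T) else X i with hs
  set t : Fin (n+1) → MvPolynomial (Fin (n+1)) K :=
    fun i => if i = j then ℓ else X i with ht
  have haevalT : ∀ (g : Fin (n+1) → MvPolynomial (Fin (n+1)) K), (∀ i, i ≠ j → g i = X i) →
      aeval g T = T := by
    intro g hg
    rw [hT, map_sum]
    refine Finset.sum_congr rfl fun i hi => ?_
    rw [map_mul, aeval_C, aeval_X, hg i (Finset.mem_erase.mp hi).1]
    rfl
  have hsℓ : aeval s ℓ = X j := by
    conv_lhs => rw [hsplit]
    rw [map_add, map_mul, aeval_C, aeval_X, haevalT s (fun i hi => by simp [hs, hi])]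
    simp only [hs, if_pos rfl]
    rw [algebraMap_eq, ← mul_assoc, ← C_mul, mul_inv_cancel₀ hj, C_1, one_mul]
    ring
  have htsj : aeval t (s j) = X j := by
    simp only [hs, if_pos rfl]
    rw [map_mul, map_sub, aeval_C, aeval_X, haevalT t (fun i hi => by simp [ht, hi])]
    simp only [ht, if_pos rfl]
    have : ℓ - T = C (c j) * X j := by rw [hsplit]; ring
    rw [this, algebraMap_eq, ← mul_assoc, ← C_mul, inv_mul_cancel₀ hj, C_1, one_mul]
  have hcomp1 : (aeval s).comp (aeval t) = AlgHom.id K (MvPolynomial (Fin (n+1)) K) := by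
    apply MvPolynomial.algHom_ext
    intro i
    simp only [AlgHom.comp_apply, aeval_X, AlgHom.id_apply]
    rcases eq_or_ne i j with rfl | hij
    · simp only [ht, if_pos rfl]; exact hsℓ
    · simp [ht, hs, hij]
  have hcomp2 : (aeval t).comp (aeval s) = AlgHom.id K (MvPolynomial (Fin (n+1)) K) := by
    apply MvPolynomial.algHom_ext
    intro i
    simp only [AlgHom.comp_apply, aeval_X, AlgHom.id_apply]
    rcases eq_or_ne i j with rfl | hij
    · exact htsj
    · simp [hs, ht, hij]
  refine ⟨AlgEquiv.ofAlgHom (aeval s) (aeval t) hcomp1 hcomp2, j, hsℓ, ?_, ?_⟩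
  · intro p m hp
    have hsi : ∀ i, (s i).IsHomogeneous 1 := by
      intro i
      rcases eq_or_ne i j with rfl | hij
      · simp only [hs, if_pos rfl]
        exact (((isHomogeneous_X K i).sub
          (IsHomogeneous.sum _ _ _ fun k _ => isHomogeneous_C_mul_X (c k) k)).C_mul _)
      · simp only [hs, if_neg hij]; exact isHomogeneous_X K i
    simpa using hp.aeval s hsi
  · intro p m hp
    have hti : ∀ i, (t i).IsHomogeneous 1 := by
      intro i
      rcases eq_or_ne i j with rfl | hij
      · simp only [ht, if_pos rfl]; exact hℓ
      · simp only [ht, if_neg hij]; exact isHomogeneous_X K i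
    simpa using hp.aeval t hti

lemma aux_prime_linear (ℓ : MvPolynomial (Fin (n+1)) K)
    (hℓ : ℓ.IsHomogeneous 1) (hℓ0 : ℓ ≠ 0) : Prime ℓ := by
  obtain ⟨E, j, hEℓ, -, -⟩ := aux_exists_good_equiv ℓ hℓ hℓ0
  rw [← MulEquiv.prime_iff E.toRingEquiv.toMulEquiv]
  show Prime (E ℓ)
  rw [hEℓ]
  exact aux_prime_X_mv j

lemma aux_isHomogeneous_of_linear_mul (ℓ q : MvPolynomial (Fin (n+1)) K) (m : ℕ)
    (hℓ : ℓ.IsHomogeneous 1) (hℓ0 : ℓ ≠ 0) (h : (ℓ * q).IsHomogeneous (m + 1)) :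
    q.IsHomogeneous m := by
  classical
  obtain ⟨E, j, hEℓ, hE, hEs⟩ := aux_exists_good_equiv ℓ hℓ hℓ0
  have h1 : (X j * E q).IsHomogeneous (m + 1) := by
    rw [← hEℓ, ← map_mul]
    exact hE _ _ h
  have h2 := aux_isHomogeneous_of_X_mul j (E q) m h1
  have h3 := hEs _ _ h2
  rwa [AlgEquiv.symm_apply_apply] at h3

lemma aux_finrank_S1 : Module.finrank K (homogeneousSubmodule (Fin (n+1)) K 1) = n + 1 := by
  classical
  have hli : LinearIndependent K (fun i : Fin (n+1) => (X i : MvPolynomial (Fin (n+1)) K)) := by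
    have h := (basisMonomials (Fin (n+1)) K).linearIndependent.comp
      (fun i : Fin (n+1) => Finsupp.single i 1) (Finsupp.single_left_injective one_ne_zero)
    exact MvPolynomial.linearIndependent_X ..
  have hspan : homogeneousSubmodule (Fin (n+1)) K 1
      = Submodule.span K (Set.range (X : Fin (n+1) → MvPolynomial (Fin (n+1)) K)) := by
    apply le_antisymm
    · intro p hp
      rw [mem_homogeneousSubmodule] at hp
      rw [aux_homog_one_decomp p hp]
      apply Submodule.sum_mem
      intro i _
      rw [← smul_eq_C_mul]
      exact Submodule.smul_mem _ _ (Submodule.subset_span (Set.mem_range_self i))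
    · rw [Submodule.span_le]
      rintro p ⟨i, rfl⟩
      rw [SetLike.mem_coe, mem_homogeneousSubmodule]
      exact isHomogeneous_X K i
  rw [hspan, finrank_span_eq_card hli, Fintype.card_fin]

end OsculatingAux

/-- For `f = ω ℓ^{d-k}` with `ω` homogeneous of degree `k < d` and `ℓ`
a linear form, the subspace
`W = span{θ ℓ^{d-k} : θ ∈ S_k} ⊓ span{ω λ ℓ^{d-k-1} : λ ∈ S_1}`
is one-dimensional if `ℓ ∤ ω`, and has dimension `n + 1` if `ℓ ∣ ω`. -/
theorem osculating_intersection_dim {K : Type*} [Field K] [CharZero K]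
    {n d k : ℕ} (hkd : k < d) (ω ℓ : MvPolynomial (Fin (n + 1)) K)
    (hω : ω.IsHomogeneous k) (hℓ : ℓ.IsHomogeneous 1) (hω0 : ω ≠ 0) (hℓ0 : ℓ ≠ 0) :
    (¬ ℓ ∣ ω →
      Module.finrank K ↥(
        Submodule.span K {p : MvPolynomial (Fin (n + 1)) K |
            ∃ θ : MvPolynomial (Fin (n + 1)) K, θ.IsHomogeneous k ∧ p = θ * ℓ ^ (d - k)} ⊓
        Submodule.span K {p : MvPolynomial (Fin (n + 1)) K |
            ∃ lam : MvPolynomial (Fin (n + 1)) K, lam.IsHomogeneous 1 ∧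
              p = ω * lam * ℓ ^ (d - k - 1)}) = 1) ∧
    (ℓ ∣ ω →
      Module.finrank K ↥(
        Submodule.span K {p : MvPolynomial (Fin (n + 1)) K |
            ∃ θ : MvPolynomial (Fin (n + 1)) K, θ.IsHomogeneous k ∧ p = θ * ℓ ^ (d - k)} ⊓
        Submodule.span K {p : MvPolynomial (Fin (n + 1)) K |
            ∃ lam : MvPolynomial (Fin (n + 1)) K, lam.IsHomogeneous 1 ∧
              p = ω * lam * ℓ ^ (d - k - 1)}) = n + 1) := by
  classical
  obtain ⟨e, he⟩ : ∃ e, d - k = e + 1 := ⟨d - k - 1, by omega⟩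
  have he1 : d - k - 1 = e := by omega
  set M : MvPolynomial (Fin (n + 1)) K →ₗ[K] MvPolynomial (Fin (n + 1)) K :=
    LinearMap.mulRight K (ℓ ^ (d - k)) with hM
  set L : MvPolynomial (Fin (n + 1)) K →ₗ[K] MvPolynomial (Fin (n + 1)) K :=
    (LinearMap.mulRight K (ℓ ^ (d - k - 1))).comp (LinearMap.mulLeft K ω) with hL
  have hMapply : ∀ p : MvPolynomial (Fin (n + 1)) K, M p = p * ℓ ^ (d - k) := fun p => rfl
  have hLapply : ∀ p : MvPolynomial (Fin (n + 1)) K, L p = ω * p * ℓ ^ (d - k - 1) :=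
    fun p => rfl
  have hA : Submodule.span K {p : MvPolynomial (Fin (n + 1)) K |
        ∃ θ : MvPolynomial (Fin (n + 1)) K, θ.IsHomogeneous k ∧ p = θ * ℓ ^ (d - k)}
      = Submodule.map M (homogeneousSubmodule (Fin (n+1)) K k) := by
    have hset : {p : MvPolynomial (Fin (n + 1)) K |
          ∃ θ : MvPolynomial (Fin (n + 1)) K, θ.IsHomogeneous k ∧ p = θ * ℓ ^ (d - k)}
        = M '' (homogeneousSubmodule (Fin (n+1)) K k : Set (MvPolynomial (Fin (n + 1)) K)) := by
      ext p
      simp only [Set.mem_setOf_eq, Set.mem_image, SetLike.mem_coe, mem_homogeneousSubmodule,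
        hMapply]
      exact ⟨fun ⟨θ, h1, h2⟩ => ⟨θ, h1, h2.symm⟩, fun ⟨θ, h1, h2⟩ => ⟨θ, h1, h2.symm⟩⟩
    rw [hset, Submodule.span_image, Submodule.span_eq]
  have hB : Submodule.span K {p : MvPolynomial (Fin (n + 1)) K |
        ∃ lam : MvPolynomial (Fin (n + 1)) K, lam.IsHomogeneous 1 ∧
          p = ω * lam * ℓ ^ (d - k - 1)}
      = Submodule.map L (homogeneousSubmodule (Fin (n+1)) K 1) := by
    have hset : {p : MvPolynomial (Fin (n + 1)) K |
          ∃ lam : MvPolynomial (Fin (n + 1)) K, lam.IsHomogeneous 1 ∧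
            p = ω * lam * ℓ ^ (d - k - 1)}
        = L '' (homogeneousSubmodule (Fin (n+1)) K 1 : Set (MvPolynomial (Fin (n + 1)) K)) := by
      ext p
      simp only [Set.mem_setOf_eq, Set.mem_image, SetLike.mem_coe, mem_homogeneousSubmodule,
        hLapply]
      exact ⟨fun ⟨θ, h1, h2⟩ => ⟨θ, h1, h2.symm⟩, fun ⟨θ, h1, h2⟩ => ⟨θ, h1, h2.symm⟩⟩
    rw [hset, Submodule.span_image, Submodule.span_eq]
  have hωX : ω * ℓ ^ (d - k) ≠ 0 := mul_ne_zero hω0 (pow_ne_zero _ hℓ0)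
  constructor
  · intro hnd
    rw [hA, hB]
    have hAB : Submodule.map M (homogeneousSubmodule (Fin (n+1)) K k) ⊓
        Submodule.map L (homogeneousSubmodule (Fin (n+1)) K 1)
        = K ∙ (ω * ℓ ^ (d - k)) := by
      apply le_antisymm
      · rintro p ⟨hp1, hp2⟩
        obtain ⟨θ, hθ, hpθ⟩ := Submodule.mem_map.mp hp1
        obtain ⟨lam, hlam, hplam⟩ := Submodule.mem_map.mp hp2
        rw [mem_homogeneousSubmodule] at hθ hlam
        rw [hMapply] at hpθ
        rw [hLapply] at hplam
        have hkey : θ * ℓ = ω * lam := by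
          rw [← hplam, he1, he, pow_succ] at hpθ
          apply mul_right_cancel₀ (pow_ne_zero e hℓ0)
          linear_combination hpθ
        have hdvd : ℓ ∣ lam := by
          have hdvd' : ℓ ∣ ω * lam := ⟨θ, by rw [← hkey]; ring⟩
          exact ((aux_prime_linear ℓ hℓ hℓ0).2.2 _ _ hdvd').resolve_left hnd
        obtain ⟨cq, rfl⟩ := hdvd
        have hcq : cq.IsHomogeneous 0 :=
          aux_isHomogeneous_of_linear_mul ℓ cq 0 hℓ hℓ0 (by simpa using hlam)
        rw [Submodule.mem_span_singleton]
        refine ⟨coeff 0 cq, ?_⟩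
        rw [smul_eq_C_mul, ← hplam, ← aux_eq_C_of_homog_zero cq hcq, he1, he, pow_succ]
        ring
      · rw [Submodule.span_singleton_le_iff_mem]
        refine ⟨Submodule.mem_map.mpr ⟨ω, hω, rfl⟩,
          Submodule.mem_map.mpr ⟨ℓ, hℓ, ?_⟩⟩
        rw [hLapply, he1, he, pow_succ]
        ring
    rw [hAB, finrank_span_singleton hωX]
  · intro hdvd
    obtain ⟨w, hw⟩ := hdvd
    have hk : 1 ≤ k := by
      by_contra hk0
      have hk0' : k = 0 := by omega
      subst hk0'
      have hωC : ω = C (coeff 0 ω) := aux_eq_C_of_homog_zero ω hω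
      have hunit : IsUnit ω := by
        rw [hωC]
        refine IsUnit.of_mul_eq_one (C (coeff 0 ω)⁻¹) ?_
        rw [← C_mul, mul_inv_cancel₀ (fun h => hω0 (by rw [hωC, h, C_0])), C_1]
      exact (aux_prime_linear ℓ hℓ hℓ0).not_isUnit (isUnit_of_dvd_unit ⟨w, hw⟩ hunit)
    have hw' : w.IsHomogeneous (k - 1) := by
      apply aux_isHomogeneous_of_linear_mul ℓ w (k - 1) hℓ hℓ0
      rw [← hw]
      convert hω using 1
      omega
    have hBA : Submodule.map L (homogeneousSubmodule (Fin (n+1)) K 1) ≤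
        Submodule.map M (homogeneousSubmodule (Fin (n+1)) K k) := by
      rintro p hp
      obtain ⟨lam, hlam, rfl⟩ := Submodule.mem_map.mp hp
      rw [mem_homogeneousSubmodule] at hlam
      refine Submodule.mem_map.mpr ⟨w * lam, ?_, ?_⟩
      · rw [mem_homogeneousSubmodule]
        have := hw'.mul hlam
        convert this using 1
        omega
      · rw [hMapply, hLapply, hw, he1, he, pow_succ]
        ring
    rw [hA, hB, inf_eq_right.mpr hBA]
    have hLinj : Function.Injective L := by
      intro a b hab
      rw [hLapply, hLapply] at hab
      exact mul_left_cancel₀ hω0 (mul_right_cancel₀ (pow_ne_zero _ hℓ0) hab)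
    rw [← LinearEquiv.finrank_eq
      (Submodule.equivMapOfInjective L hLinj (homogeneousSubmodule (Fin (n+1)) K 1))]
    exact aux_finrank_S1
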